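/- arXiv:math/0311422 — 2 statements merged into one kernel-verified Lean document; each statement's English description precedes it below -/
import Mathlib

section
/- Let (Ω, F, P) be a probability space, θ : Ω → Ω a measure-preserving transformation, and g : Ω → (0,∞) a measurable function such that log⁺(g(θω)/g(ω)) is integrable with respect to P. Then g is tempered, i.e. lim_{n→∞} (1/n) log g(θⁿ(ω)) = 0 for P-almost every ω. -/
open MeasureTheory Filter Topology

section Aux

variable {Ω : Type*} [MeasurableSpace Ω]

/-! ### Truncation -/

/-- Truncation of a real number to `[-c, c]`. -/
noncomputable def trunc (c : ℝ) (x : ℝ) : ℝ := max (min x c) (-c)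

lemma trunc_mono (c : ℝ) {a b : ℝ} (h : a ≤ b) : trunc c a ≤ trunc c b :=
  max_le_max (min_le_min h le_rfl) le_rfl

lemma abs_trunc_sub_trunc (c a b : ℝ) : |trunc c a - trunc c b| ≤ |a - b| := by
  refine (abs_max_sub_max_le_abs _ _ _).trans ?_
  simpa using abs_min_sub_min_le_max a c b c

lemma trunc_sub_trunc_le (c a b : ℝ) : trunc c a - trunc c b ≤ max (a - b) 0 := by
  rcases le_total a b with h | h
  · exact (sub_nonpos.mpr (trunc_mono c h)).trans (le_max_right _ _)
  · refine le_trans (le_trans (le_abs_self _) (abs_trunc_sub_trunc c a b)) ?_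
    rw [abs_of_nonneg (sub_nonneg.mpr h)]; exact le_max_left _ _

lemma abs_trunc_le (c x : ℝ) (hc : 0 ≤ c) : |trunc c x| ≤ c := by
  rw [abs_le]
  refine ⟨le_max_right _ _, max_le (min_le_right _ _) (by linarith)⟩

lemma trunc_eq_self {c x : ℝ} (h : |x| ≤ c) : trunc c x = x := by
  rw [abs_le] at h
  rw [trunc, min_eq_left h.2, max_eq_left h.1]

lemma measurable_trunc (c : ℝ) : Measurable (trunc c) :=
  ((measurable_id.min measurable_const).max measurable_const)

/-! ### Change of variables for a measure preserving map -/

lemma integral_comp_mp {P : Measure Ω} {θ : Ω → Ω} (hθ : MeasurePreserving θ P P)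
    {u : Ω → ℝ} (hu : AEStronglyMeasurable u P) :
    ∫ ω, u (θ ω) ∂P = ∫ ω, u ω ∂P := by
  rw [← MeasureTheory.integral_map hθ.measurable.aemeasurable (by rwa [hθ.map_eq]), hθ.map_eq]

/-! ### The maximal function and Hopf's maximal ergodic lemma -/

/-- `hopfMax θ h N ω = max (0, S₁ h ω, …, S_N h ω)` where `Sₙ` is the Birkhoff sum. -/
noncomputable def hopfMax (θ : Ω → Ω) (h : Ω → ℝ) : ℕ → Ω → ℝ
  | 0 => fun _ => 0
  | (N + 1) => fun ω => max 0 (h ω + hopfMax θ h N (θ ω))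

lemma hopfMax_nonneg (θ : Ω → Ω) (h : Ω → ℝ) (N : ℕ) (ω : Ω) : 0 ≤ hopfMax θ h N ω := by
  cases N with
  | zero => exact le_rfl
  | succ N => exact le_max_left _ _

lemma hopfMax_mono (θ : Ω → Ω) (h : Ω → ℝ) (N : ℕ) : ∀ ω, hopfMax θ h N ω ≤ hopfMax θ h (N + 1) ω := by
  induction N with
  | zero => intro ω; exact hopfMax_nonneg θ h 1 ω
  | succ N ih =>
    intro ω
    exact max_le_max le_rfl (add_le_add le_rfl (ih (θ ω)))

lemma birkhoffSum_le_hopfMax (θ : Ω → Ω) (h : Ω → ℝ) (n : ℕ) : ∀ ω,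
    birkhoffSum θ h n ω ≤ hopfMax θ h n ω := by
  induction n with
  | zero => intro ω; simp [hopfMax]
  | succ n ih =>
    intro ω
    rw [birkhoffSum_succ']
    exact le_trans (add_le_add le_rfl (ih (θ ω))) (le_max_right _ _)

lemma hopfMax_measurable {θ : Ω → Ω} {h : Ω → ℝ} (hθ : Measurable θ) (hh : Measurable h)
    (N : ℕ) : Measurable (hopfMax θ h N) := by
  induction N with
  | zero => exact measurable_const
  | succ N ih => exact measurable_const.max (hh.add (ih.comp hθ))

lemma hopfMax_integrable {P : Measure Ω} {θ : Ω → Ω} (hθ : MeasurePreserving θ P P)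
    {h : Ω → ℝ} (hhm : Measurable h) (hhi : Integrable h P) (N : ℕ) :
    Integrable (hopfMax θ h N) P := by
  induction N with
  | zero => simpa [hopfMax] using integrable_const (0 : ℝ)
  | succ N ih =>
    have hcomp : Integrable (fun ω => hopfMax θ h N (θ ω)) P :=
      hθ.integrable_comp ((hopfMax_measurable hθ.measurable hhm N).aestronglyMeasurable) |>.mpr ih
    have : Integrable (fun ω => max (h ω + hopfMax θ h N (θ ω)) 0) P :=
      (hhi.add hcomp).pos_part
    refine this.congr (Filter.Eventually.of_forall fun ω => ?_)
    simp [hopfMax, max_comm]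

/-- Hopf's maximal ergodic lemma. -/
lemma hopf_maximal {P : Measure Ω} [IsProbabilityMeasure P] {θ : Ω → Ω}
    (hθ : MeasurePreserving θ P P) {h : Ω → ℝ} (hhm : Measurable h) (hhi : Integrable h P)
    (N : ℕ) : 0 ≤ ∫ ω in {ω | 0 < hopfMax θ h N ω}, h ω ∂P := by
  cases N with
  | zero =>
    simp [hopfMax]
  | succ N =>
    set M := hopfMax θ h (N + 1) with hM
    have hMm : Measurable M := hopfMax_measurable hθ.measurable hhm (N + 1)
    have hMi : Integrable M P := hopfMax_integrable hθ hhm hhi (N + 1)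
    have hMci : Integrable (fun ω => M (θ ω)) P :=
      hθ.integrable_comp (hMm.aestronglyMeasurable) |>.mpr hMi
    set A : Set Ω := {ω | 0 < M ω} with hA
    have hAm : MeasurableSet A := measurableSet_lt measurable_const hMm
    have key : ∀ ω ∈ A, M ω - M (θ ω) ≤ h ω := by
      intro ω hω
      have h1 : M ω = h ω + hopfMax θ h N (θ ω) := by
        have := hω
        simp only [hA, Set.mem_setOf_eq] at this
        rw [hM]
        simp only [hopfMax]
        exact max_eq_right_iff.mpr (by
          by_contra hc
          push_neg at hc
          have : M ω = 0 := by
            rw [hM]; simp only [hopfMax]; exact max_eq_left hc.le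
          simp [hA, Set.mem_setOf_eq, this] at hω)
      have h2 : hopfMax θ h N (θ ω) ≤ M (θ ω) := hopfMax_mono θ h N (θ ω)
      linarith
    have step1 : ∫ ω in A, (M ω - M (θ ω)) ∂P ≤ ∫ ω in A, h ω ∂P := by
      refine setIntegral_mono_on ((hMi.sub hMci).integrableOn) (hhi.integrableOn) hAm ?_
      intro ω hω; exact key ω hω
    have step2 : ∫ ω in A, (M ω - M (θ ω)) ∂P
        = ∫ ω in A, M ω ∂P - ∫ ω in A, M (θ ω) ∂P :=
      integral_sub (hMi.integrableOn) (hMci.integrableOn)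
    have step3 : ∫ ω in A, M ω ∂P = ∫ ω, M ω ∂P := by
      rw [← integral_indicator hAm]
      refine integral_congr_ae (Filter.Eventually.of_forall fun ω => ?_)
      by_cases hω : ω ∈ A
      · simp [Set.indicator_of_mem hω]
      · have : M ω = 0 := le_antisymm (not_lt.mp hω) (hopfMax_nonneg θ h (N + 1) ω)
        simp [Set.indicator_of_notMem hω, this]
    have step4 : ∫ ω in A, M (θ ω) ∂P ≤ ∫ ω, M (θ ω) ∂P :=
      setIntegral_le_integral hMci
        (Filter.Eventually.of_forall fun ω => hopfMax_nonneg θ h (N + 1) (θ ω))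
    have step5 : ∫ ω, M (θ ω) ∂P = ∫ ω, M ω ∂P := integral_comp_mp hθ hMm.aestronglyMeasurable
    have : (0 : ℝ) ≤ ∫ ω in A, (M ω - M (θ ω)) ∂P := by
      rw [step2, step3]
      linarith [step4, step5.le, step5.ge]
    linarith

lemma measurable_birkhoffSum {θ : Ω → Ω} {f : Ω → ℝ} (hθ : Measurable θ) (hfm : Measurable f)
    (n : ℕ) : Measurable (birkhoffSum θ f n) :=
  Finset.measurable_sum _ fun k _ => hfm.comp (hθ.iterate k)

/-- From Hopf's lemma: an invariant set on which the Birkhoff sums climb above slope `ε`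
infinitely often, for a function with zero integral over it, is null. -/
lemma measure_eq_zero_of_freq_gt {P : Measure Ω} [IsProbabilityMeasure P] {θ : Ω → Ω}
    (hθ : MeasurePreserving θ P P) {f : Ω → ℝ} (hfm : Measurable f) (hfi : Integrable f P)
    {D : Set Ω} (hDm : MeasurableSet D) (hDinv : ∀ ω, θ ω ∈ D ↔ ω ∈ D)
    (hfD : ∫ ω in D, f ω ∂P = 0) {ε : ℝ} (hε : 0 < ε)
    (hDgt : ∀ ω ∈ D, ∃ n : ℕ, 1 ≤ n ∧ (n : ℝ) * ε < birkhoffSum θ f n ω) : P D = 0 := by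
  set h : Ω → ℝ := D.indicator (fun ω => f ω - ε) with hh
  have hm : Measurable h := (hfm.sub measurable_const).indicator hDm
  have hi : Integrable h P := ((hfi.sub (integrable_const ε)).indicator hDm)
  have iter_mem : ∀ ω ∈ D, ∀ k, θ^[k] ω ∈ D := by
    intro ω hω k
    induction k with
    | zero => simpa using hω
    | succ k ih => rw [Function.iterate_succ_apply']; exact (hDinv _).mpr ih
  have hSD : ∀ ω ∈ D, ∀ n : ℕ, birkhoffSum θ h n ω = birkhoffSum θ f n ω - n * ε := by
    intro ω hω n
    have : ∀ k ∈ Finset.range n, h (θ^[k] ω) = f (θ^[k] ω) - ε := fun k _ =>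
      Set.indicator_of_mem (iter_mem ω hω k) _
    rw [birkhoffSum, Finset.sum_congr rfl this, Finset.sum_sub_distrib, Finset.sum_const,
      Finset.card_range, nsmul_eq_mul]
    rfl
  have hoff : ∀ ω, ω ∉ D → ∀ N, hopfMax θ h N ω = 0 := by
    intro ω hω N
    induction N generalizing ω hω with
    | zero => rfl
    | succ N ih =>
      have h1 : h ω = 0 := Set.indicator_of_notMem hω _
      have h2 : θ ω ∉ D := fun hc => hω ((hDinv ω).mp hc)
      simp [hopfMax, h1, ih (θ ω) h2]
  set A : ℕ → Set Ω := fun N => {ω | 0 < hopfMax θ h N ω} with hA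
  have hAm : ∀ N, MeasurableSet (A N) := fun N =>
    measurableSet_lt measurable_const (hopfMax_measurable hθ.measurable hm N)
  have hAmono : Monotone A := monotone_nat_of_le_succ fun N ω hω =>
    lt_of_lt_of_le hω (hopfMax_mono θ h N ω)
  have hAunion : (⋃ N, A N) = D := by
    ext ω
    constructor
    · rintro ⟨s, ⟨N, rfl⟩, hω⟩
      by_contra hc
      have := hoff ω hc N
      simp only [hA, Set.mem_setOf_eq] at hω
      rw [this] at hω; exact lt_irrefl 0 hω
    · intro hω
      obtain ⟨n, hn1, hn⟩ := hDgt ω hω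
      have : 0 < birkhoffSum θ h n ω := by
        rw [hSD ω hω n]
        have : (0:ℝ) ≤ (n:ℝ) * ε := by positivity
        linarith
      exact Set.mem_iUnion.mpr ⟨n, lt_of_lt_of_le this (birkhoffSum_le_hopfMax θ h n ω)⟩
  have htend : Tendsto (fun N => ∫ ω in A N, h ω ∂P) atTop (𝓝 (∫ ω in ⋃ N, A N, h ω ∂P)) :=
    tendsto_setIntegral_of_monotone hAm hAmono hi.integrableOn
  have hnonneg : 0 ≤ ∫ ω in ⋃ N, A N, h ω ∂P :=
    le_of_tendsto_of_tendsto' tendsto_const_nhds htend fun N => hopf_maximal hθ hm hi N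
  rw [hAunion] at hnonneg
  have : ∫ ω in D, h ω ∂P = - (ε * (P D).toReal) := by
    have h1 : ∫ ω in D, h ω ∂P = ∫ ω in D, (f ω - ε) ∂P := by
      refine setIntegral_congr_fun hDm fun ω hω => ?_
      exact Set.indicator_of_mem hω _
    rw [h1, integral_sub hfi.integrableOn (integrable_const ε).integrableOn, hfD,
      setIntegral_const]
    simp [mul_comm, measureReal_def]
  rw [this] at hnonneg
  have hle : ε * (P D).toReal ≤ 0 := by linarith
  have := mul_nonneg hε.le ENNReal.toReal_nonneg (a := ε) (b := (P D).toReal)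
  have htr : (P D).toReal = 0 := by
    nlinarith [ENNReal.toReal_nonneg (a := P D)]
  exact (ENNReal.toReal_eq_zero_iff _).mp htr |>.resolve_right (measure_ne_top P D)

/-- One-sided Birkhoff-type bound: if the integral of `f` vanishes over every invariant set,
then almost surely the Birkhoff sums of `f` eventually stay below any positive slope. -/
lemma ae_eventually_birkhoffSum_le {P : Measure Ω} [IsProbabilityMeasure P] {θ : Ω → Ω}
    (hθ : MeasurePreserving θ P P) {f : Ω → ℝ} (hfm : Measurable f) (hfi : Integrable f P)
    (hf0 : ∀ D : Set Ω, MeasurableSet D → (∀ ω, θ ω ∈ D ↔ ω ∈ D) → ∫ ω in D, f ω ∂P = 0) :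
    ∀ᵐ ω ∂P, ∀ ε : ℝ, 0 < ε → ∀ᶠ n in atTop, birkhoffSum θ f n ω ≤ (n : ℝ) * ε := by
  set Dq : ℚ → Set Ω := fun q => {ω | ∃ᶠ n : ℕ in atTop, (n : ℝ) * q < birkhoffSum θ f n ω} with hDq
  have hDqm : ∀ q, MeasurableSet (Dq q) := by
    intro q
    have : Dq q = ⋂ m : ℕ, ⋃ n : ℕ, ⋃ (_ : m ≤ n), {ω | (n : ℝ) * q < birkhoffSum θ f n ω} := by
      ext ω
      simp only [hDq, Set.mem_setOf_eq, frequently_atTop, Set.mem_iInter, Set.mem_iUnion]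
      constructor <;> (intro h m; obtain ⟨b, hb, hp⟩ := h m; exact ⟨b, hb, hp⟩)
    rw [this]
    exact MeasurableSet.iInter fun m => MeasurableSet.iUnion fun n => MeasurableSet.iUnion
      fun _ => measurableSet_lt measurable_const (measurable_birkhoffSum hθ.measurable hfm n)
  -- moving between `ω` and `θ ω` shifts the slope slightly
  have key₁ : ∀ (q q' : ℚ) (ω : Ω), (q' : ℝ) < q → ω ∈ Dq q → θ ω ∈ Dq q' := by
    intro q q' ω hqq hω
    have hev : ∀ᶠ n : ℕ in atTop, f ω - q' ≤ (n : ℝ) * ((q : ℝ) - q') := by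
      obtain ⟨N, hN⟩ := exists_nat_ge ((f ω - q') / ((q : ℝ) - q'))
      filter_upwards [eventually_ge_atTop N] with n hn
      have h1 : ((f ω - q') / ((q : ℝ) - q')) ≤ n := hN.trans (Nat.cast_le.2 hn)
      rw [div_le_iff₀ (by linarith)] at h1
      linarith
    have hcomb := (hω.and_eventually hev)
    simp only [hDq, Set.mem_setOf_eq] at hcomb ⊢
    rw [frequently_atTop] at hcomb ⊢
    intro m₀
    obtain ⟨n, hnm, h1, h2⟩ := hcomb (m₀ + 1)
    have hn1 : 1 ≤ n := le_trans (Nat.le_add_left 1 m₀) hnm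
    refine ⟨n - 1, by omega, ?_⟩
    have hrw : birkhoffSum θ f n ω = f ω + birkhoffSum θ f (n - 1) (θ ω) := by
      conv_lhs => rw [show n = (n - 1) + 1 by omega]
      exact birkhoffSum_succ' θ f (n - 1) ω
    have hcast : ((n - 1 : ℕ) : ℝ) = (n : ℝ) - 1 := by
      rw [Nat.cast_sub hn1]; norm_num
    rw [hrw] at h1
    rw [hcast]
    nlinarith [h1, h2]
  have key₂ : ∀ (q q' : ℚ) (ω : Ω), (q' : ℝ) < q → θ ω ∈ Dq q → ω ∈ Dq q' := by
    intro q q' ω hqq hω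
    have hev : ∀ᶠ n : ℕ in atTop, (q' : ℝ) - f ω ≤ (n : ℝ) * ((q : ℝ) - q') := by
      obtain ⟨N, hN⟩ := exists_nat_ge (((q' : ℝ) - f ω) / ((q : ℝ) - q'))
      filter_upwards [eventually_ge_atTop N] with n hn
      have h1 : (((q' : ℝ) - f ω) / ((q : ℝ) - q')) ≤ n := hN.trans (Nat.cast_le.2 hn)
      rw [div_le_iff₀ (by linarith)] at h1
      linarith
    have hcomb := (hω.and_eventually hev)
    simp only [hDq, Set.mem_setOf_eq] at hcomb ⊢
    rw [frequently_atTop] at hcomb ⊢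
    intro m₀
    obtain ⟨m, hmm, h1, h2⟩ := hcomb m₀
    refine ⟨m + 1, by omega, ?_⟩
    have hrw : birkhoffSum θ f (m + 1) ω = f ω + birkhoffSum θ f m (θ ω) :=
      birkhoffSum_succ' θ f m ω
    rw [hrw]
    push_cast
    nlinarith [h1, h2]
  -- the bad sets
  set E : ℕ → Set Ω := fun k => ⋃ (q : ℚ) (_ : (1 : ℝ) / (k + 1) < q), Dq q with hE
  have hEm : ∀ k, MeasurableSet (E k) := fun k =>
    MeasurableSet.iUnion fun q => MeasurableSet.iUnion fun _ => hDqm q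
  have hEinv : ∀ k, ∀ ω, θ ω ∈ E k ↔ ω ∈ E k := by
    intro k ω
    constructor
    · intro hmem
      obtain ⟨s, ⟨q, rfl⟩, hs⟩ := hmem
      obtain ⟨t, ht, hmem⟩ := hs
      simp only [Set.mem_range] at ht
      obtain ⟨hq, rfl⟩ := ht
      obtain ⟨q', hq1', hq2'⟩ := exists_rat_btwn hq
      have : ω ∈ Dq q' := key₂ q q' ω (by exact_mod_cast hq2') hmem
      exact Set.mem_iUnion.mpr ⟨q', Set.mem_iUnion.mpr ⟨hq1', this⟩⟩
    · intro hmem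
      obtain ⟨s, ⟨q, rfl⟩, hs⟩ := hmem
      obtain ⟨t, ht, hmem⟩ := hs
      simp only [Set.mem_range] at ht
      obtain ⟨hq, rfl⟩ := ht
      obtain ⟨q', hq1', hq2'⟩ := exists_rat_btwn hq
      have : θ ω ∈ Dq q' := key₁ q q' ω (by exact_mod_cast hq2') hmem
      exact Set.mem_iUnion.mpr ⟨q', Set.mem_iUnion.mpr ⟨hq1', this⟩⟩
  have hEnull : ∀ k, P (E k) = 0 := by
    intro k
    have hεpos : (0 : ℝ) < 1 / (k + 1) := by positivity
    refine measure_eq_zero_of_freq_gt hθ hfm hfi (hEm k) (hEinv k) (hf0 _ (hEm k) (hEinv k))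
      hεpos ?_
    intro ω hω
    obtain ⟨s, ⟨q, rfl⟩, hs⟩ := hω
    obtain ⟨t, ht, hmem⟩ := hs
    simp only [Set.mem_range] at ht
    obtain ⟨hq, rfl⟩ := ht
    obtain ⟨n, hn1, hn⟩ := frequently_atTop.mp hmem 1
    refine ⟨n, hn1, lt_of_le_of_lt ?_ hn⟩
    have : (0 : ℝ) ≤ (n : ℝ) := Nat.cast_nonneg n
    nlinarith
  have hae : ∀ᵐ ω ∂P, ∀ k : ℕ, ω ∉ E k := by
    rw [ae_all_iff]
    intro k
    rw [ae_iff]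
    simpa using hEnull k
  filter_upwards [hae] with ω hω ε hε
  obtain ⟨k, hk⟩ := exists_nat_gt (1 / ε)
  have hk' : (1 : ℝ) / (k + 1) < ε := by
    rw [div_lt_iff₀ (by positivity)]
    rw [div_lt_iff₀ hε] at hk
    nlinarith
  obtain ⟨q, hq1, hq2⟩ := exists_rat_btwn hk'
  have hnotfreq : ¬ (∃ᶠ n : ℕ in atTop, (n : ℝ) * q < birkhoffSum θ f n ω) := by
    intro hfreq
    exact hω k (Set.mem_iUnion.mpr ⟨q, Set.mem_iUnion.mpr ⟨hq1, hfreq⟩⟩)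
  rw [not_frequently] at hnotfreq
  filter_upwards [hnotfreq] with n hn
  have : (n : ℝ) * q ≤ (n : ℝ) * ε :=
    mul_le_mul_of_nonneg_left hq2.le (Nat.cast_nonneg n)
  push_neg at hn
  linarith

/-- Two-sided version: the Birkhoff averages tend to zero almost surely. -/
lemma ae_tendsto_birkhoffSum_div {P : Measure Ω} [IsProbabilityMeasure P] {θ : Ω → Ω}
    (hθ : MeasurePreserving θ P P) {f : Ω → ℝ} (hfm : Measurable f) (hfi : Integrable f P)
    (hf0 : ∀ D : Set Ω, MeasurableSet D → (∀ ω, θ ω ∈ D ↔ ω ∈ D) → ∫ ω in D, f ω ∂P = 0) :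
    ∀ᵐ ω ∂P, Tendsto (fun n : ℕ => birkhoffSum θ f n ω / n) atTop (𝓝 0) := by
  have hneg0 : ∀ D : Set Ω, MeasurableSet D → (∀ ω, θ ω ∈ D ↔ ω ∈ D) →
      ∫ ω in D, (-f) ω ∂P = 0 := by
    intro D hD hDi
    simp only [Pi.neg_apply]
    rw [integral_neg, hf0 D hD hDi, neg_zero]
  have h₁ := ae_eventually_birkhoffSum_le hθ hfm hfi hf0
  have h₂ := ae_eventually_birkhoffSum_le hθ hfm.neg hfi.neg hneg0
  filter_upwards [h₁, h₂] with ω hω₁ hω₂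
  rw [Metric.tendsto_atTop]
  intro ε hε
  have hbound₁ := hω₁ (ε / 2) (by linarith)
  have hbound₂ := hω₂ (ε / 2) (by linarith)
  have hneg : ∀ n : ℕ, birkhoffSum θ (fun x => -f x) n ω = - birkhoffSum θ f n ω := by
    intro n
    simp [birkhoffSum]
  rw [eventually_atTop] at hbound₁ hbound₂
  obtain ⟨N₁, hN₁⟩ := hbound₁
  obtain ⟨N₂, hN₂⟩ := hbound₂
  refine ⟨max (max N₁ N₂) 1, fun n hn => ?_⟩
  have hn₁ : N₁ ≤ n := le_trans (le_trans (le_max_left _ _) (le_max_left _ _)) hn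
  have hn₂ : N₂ ≤ n := le_trans (le_trans (le_max_right _ _) (le_max_left _ _)) hn
  have hnpos : (1 : ℕ) ≤ n := le_trans (le_max_right _ _) hn
  have hnR : (1 : ℝ) ≤ (n : ℝ) := by exact_mod_cast hnpos
  have hb₁ := hN₁ n hn₁
  have hb₂ := hN₂ n hn₂
  rw [show birkhoffSum θ (-f) n ω = birkhoffSum θ (fun x => -f x) n ω from rfl, hneg n] at hb₂
  rw [Real.dist_eq, sub_zero]
  have habs : |birkhoffSum θ f n ω| ≤ (n : ℝ) * (ε / 2) := abs_le.mpr ⟨by linarith, hb₁⟩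
  have hfinal : |birkhoffSum θ f n ω / n| ≤ ε / 2 := by
    rw [abs_div, abs_of_nonneg (show (0:ℝ) ≤ (n:ℝ) by positivity),
      div_le_iff₀ (show (0:ℝ) < (n:ℝ) by linarith)]
    calc |birkhoffSum θ f n ω| ≤ (n : ℝ) * (ε / 2) := habs
      _ = ε / 2 * n := mul_comm _ _
  linarith [abs_nonneg (birkhoffSum θ f n ω / n)]

end Aux

/-- If `θ` preserves the probability measure `P` and `log⁺ (g (θ ω) / g ω)` is integrable
for a positive measurable `g`, then `g` is tempered:
`(1/n) log g(θⁿ ω) → 0` for `P`-a.e. `ω`. -/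
theorem tempered_of_integrable_logPos_ratio
    {Ω : Type*} [MeasurableSpace Ω] (P : Measure Ω) [IsProbabilityMeasure P]
    (θ : Ω → Ω) (hθ : MeasurePreserving θ P P)
    (g : Ω → ℝ) (hg_meas : Measurable g) (hg_pos : ∀ ω, 0 < g ω)
    (hint : Integrable (fun ω => max (Real.log (g (θ ω) / g ω)) 0) P) :
    ∀ᵐ ω ∂P, Tendsto (fun n : ℕ => Real.log (g (θ^[n] ω)) / n) atTop (𝓝 0) := by
  set ℓ : Ω → ℝ := fun ω => Real.log (g ω) with hℓ
  have hℓm : Measurable ℓ := Real.measurable_log.comp hg_meas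
  set f : Ω → ℝ := fun ω => ℓ (θ ω) - ℓ ω with hf
  have hfm : Measurable f := (hℓm.comp hθ.measurable).sub hℓm
  have hfeq : ∀ ω, f ω = Real.log (g (θ ω) / g ω) := fun ω =>
    (Real.log_div (hg_pos (θ ω)).ne' (hg_pos ω).ne').symm
  have hplus : Integrable (fun ω => max (f ω) 0) P := by
    exact hint.congr (Filter.Eventually.of_forall fun ω =>
      (congrArg (fun x => max x 0) (hfeq ω)).symm)
  -- the truncated coboundaries
  set ℓc : ℕ → Ω → ℝ := fun c ω => trunc c (ℓ ω) with hℓc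
  have hℓcm : ∀ c, Measurable (ℓc c) := fun c => (measurable_trunc c).comp hℓm
  have hℓci : ∀ c, Integrable (ℓc c) P := by
    intro c
    refine (integrable_const (c : ℝ)).mono' (hℓcm c).aestronglyMeasurable
      (Filter.Eventually.of_forall fun ω => ?_)
    rw [Real.norm_eq_abs]
    exact abs_trunc_le _ _ (Nat.cast_nonneg c)
  set fc : ℕ → Ω → ℝ := fun c ω => ℓc c (θ ω) - ℓc c ω with hfc
  have hfcm : ∀ c, Measurable (fc c) := fun c => ((hℓcm c).comp hθ.measurable).sub (hℓcm c)
  have hcompi : ∀ c : ℕ, Integrable (fun ω => ℓc c (θ ω)) P := fun c =>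
    hθ.integrable_comp (hℓcm c).aestronglyMeasurable |>.mpr (hℓci c)
  have hfci : ∀ c, Integrable (fc c) P := fun c => (hcompi c).sub (hℓci c)
  have hfc_le : ∀ c ω, fc c ω ≤ max (f ω) 0 := fun c ω => trunc_sub_trunc_le _ _ _
  have hfc_abs : ∀ c ω, |fc c ω| ≤ |f ω| := fun c ω => abs_trunc_sub_trunc _ _ _
  have hfc_tend : ∀ ω, Tendsto (fun c : ℕ => fc c ω) atTop (𝓝 (f ω)) := by
    intro ω
    refine tendsto_const_nhds.congr' ?_
    filter_upwards [eventually_ge_atTop ⌈max |ℓ (θ ω)| |ℓ ω|⌉₊] with c hc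
    have hcr : max |ℓ (θ ω)| |ℓ ω| ≤ (c : ℝ) := (Nat.le_ceil _).trans (Nat.cast_le.2 hc)
    simp only [hfc, hℓc]
    rw [trunc_eq_self ((le_max_left _ _).trans hcr), trunc_eq_self ((le_max_right _ _).trans hcr)]
  -- integrability of the coboundary via Fatou
  have hfi : Integrable f P := by
    have hFi : ∀ c : ℕ, Integrable (fun ω => max (f ω) 0 - fc c ω) P := fun c =>
      hplus.sub (hfci c)
    have hF0 : ∀ c : ℕ, ∫ ω, (max (f ω) 0 - fc c ω) ∂P = ∫ ω, max (f ω) 0 ∂P := by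
      intro c
      rw [integral_sub hplus (hfci c)]
      have : ∫ ω, fc c ω ∂P = 0 := by
        rw [show (fun ω => fc c ω) = fun ω => ℓc c (θ ω) - ℓc c ω from rfl,
          integral_sub (hcompi c) (hℓci c),
          integral_comp_mp hθ (hℓcm c).aestronglyMeasurable, sub_self]
      rw [this, sub_zero]
    have hlint : ∀ c : ℕ, ∫⁻ ω, ENNReal.ofReal (max (f ω) 0 - fc c ω) ∂P
        = ENNReal.ofReal (∫ ω, max (f ω) 0 ∂P) := by
      intro c
      rw [← MeasureTheory.ofReal_integral_eq_lintegral_ofReal (hFi c)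
        (Filter.Eventually.of_forall fun ω => sub_nonneg.mpr (hfc_le c ω)), hF0 c]
    have hFatou := MeasureTheory.lintegral_liminf_le (μ := P) (u := atTop)
      (f := fun (c : ℕ) ω => ENNReal.ofReal (max (f ω) 0 - fc c ω))
      (fun c => ENNReal.measurable_ofReal.comp ((hfm.max measurable_const).sub (hfcm c)))
    have hptw : ∀ ω, Tendsto (fun c : ℕ => ENNReal.ofReal (max (f ω) 0 - fc c ω)) atTop
        (𝓝 (ENNReal.ofReal (max (f ω) 0 - f ω))) := fun ω =>
      (ENNReal.continuous_ofReal.tendsto _).comp (tendsto_const_nhds.sub (hfc_tend ω))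
    have hliminf : (fun ω => liminf (fun c : ℕ => ENNReal.ofReal (max (f ω) 0 - fc c ω)) atTop)
        = fun ω => ENNReal.ofReal (max (f ω) 0 - f ω) :=
      funext fun ω => (hptw ω).liminf_eq
    rw [hliminf] at hFatou
    have hbound : ∫⁻ ω, ENNReal.ofReal (max (f ω) 0 - f ω) ∂P
        ≤ ENNReal.ofReal (∫ ω, max (f ω) 0 ∂P) := by
      refine hFatou.trans ?_
      simp only [hlint]
      exact liminf_const _ |>.le
    have hneg_int : Integrable (fun ω => max (f ω) 0 - f ω) P := by
      refine ⟨((hfm.max measurable_const).sub hfm).aestronglyMeasurable, ?_⟩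
      rw [hasFiniteIntegral_iff_ofReal (Filter.Eventually.of_forall fun ω =>
        sub_nonneg.mpr (le_max_left _ _))]
      exact lt_of_le_of_lt hbound ENNReal.ofReal_lt_top
    refine (hplus.sub hneg_int).congr (Filter.Eventually.of_forall fun ω => ?_)
    show max (f ω) 0 - (max (f ω) 0 - f ω) = f ω
    ring
  -- the integral of `f` over any invariant set vanishes
  have hf0 : ∀ D : Set Ω, MeasurableSet D → (∀ ω, θ ω ∈ D ↔ ω ∈ D) →
      ∫ ω in D, f ω ∂P = 0 := by
    intro D hDm hDinv
    have hfcD : ∀ c : ℕ, ∫ ω in D, fc c ω ∂P = 0 := by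
      intro c
      have h1 : ∫ ω in D, fc c ω ∂P
          = ∫ ω in D, ℓc c (θ ω) ∂P - ∫ ω in D, ℓc c ω ∂P := by
        rw [show (fun ω => fc c ω) = fun ω => ℓc c (θ ω) - ℓc c ω from rfl]
        exact integral_sub (hcompi c).integrableOn (hℓci c).integrableOn
      have h2 : ∫ ω in D, ℓc c (θ ω) ∂P = ∫ ω in D, ℓc c ω ∂P := by
        rw [← integral_indicator hDm, ← integral_indicator hDm]
        have hind : (D.indicator fun ω => ℓc c (θ ω))
            = fun ω => (D.indicator (ℓc c)) (θ ω) := by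
          funext ω
          by_cases hω : ω ∈ D
          · rw [Set.indicator_of_mem hω, Set.indicator_of_mem ((hDinv ω).mpr hω)]
          · rw [Set.indicator_of_notMem hω,
              Set.indicator_of_notMem (fun hc => hω ((hDinv ω).mp hc))]
        rw [hind]
        exact integral_comp_mp hθ (((hℓcm c).indicator hDm).aestronglyMeasurable)
      rw [h1, h2, sub_self]
    have htendD : Tendsto (fun c : ℕ => ∫ ω in D, fc c ω ∂P) atTop (𝓝 (∫ ω in D, f ω ∂P)) := by
      refine tendsto_integral_of_dominated_convergence (fun ω => |f ω|)
        (fun c => ((hfcm c).aestronglyMeasurable).restrict) (hfi.abs.integrableOn) ?_ ?_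
      · exact fun c => Filter.Eventually.of_forall fun ω => by
          rw [Real.norm_eq_abs]; exact hfc_abs c ω
      · exact Filter.Eventually.of_forall fun ω => hfc_tend ω
    have h0 : Tendsto (fun c : ℕ => ∫ ω in D, fc c ω ∂P) atTop (𝓝 0) := by
      simp only [hfcD]
      exact tendsto_const_nhds
    exact tendsto_nhds_unique htendD h0
  -- conclude via the Birkhoff-type lemma
  have hae := ae_tendsto_birkhoffSum_div hθ hfm hfi hf0
  have htel : ∀ ω (n : ℕ), Real.log (g (θ^[n] ω)) = ℓ ω + birkhoffSum θ f n ω := by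
    intro ω n
    induction n with
    | zero => simp [hℓ]
    | succ n ih =>
      rw [birkhoffSum_succ, Function.iterate_succ_apply']
      have : f (θ^[n] ω) = ℓ (θ (θ^[n] ω)) - ℓ (θ^[n] ω) := rfl
      rw [this]
      have hℓn : ℓ (θ^[n] ω) = Real.log (g (θ^[n] ω)) := rfl
      rw [show ℓ (θ (θ^[n] ω)) = Real.log (g (θ (θ^[n] ω))) from rfl] at *
      linarith [ih]
  filter_upwards [hae] with ω hω
  have h1 : Tendsto (fun n : ℕ => ℓ ω / n) atTop (𝓝 0) :=
    tendsto_const_div_atTop_nhds_zero_nat (ℓ ω)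
  have := (h1.add hω)
  rw [add_zero] at this
  refine this.congr fun n => ?_
  rw [htel ω n, add_div]
end

section
/- Let T : Y → Y be a continuous map of a compact metric space and Φ : Y → ℝ continuous. Suppose every T-invariant Borel probability measure m satisfies ∫ Φ dm ≥ Λ > 0. Then for every 0 < λ < Λ there exists a constant C > 0 such that Σ_{i=0}^{n-1} Φ(Tⁱy) ≥ log C + λn for all y ∈ Y and all n ≥ 1. -/
open MeasureTheory Filter Topology BoundedContinuousFunction
open scoped NNReal ENNReal

section Aux

variable {Y : Type*} [MetricSpace Y] [CompactSpace Y]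

lemma aux_real_sum_min (a d : ℝ) (ha : 0 ≤ a) (hd : 0 ≤ d) :
    ∀ N : ℕ, ∑ j ∈ Finset.range N, max 0 (min d (a - j * d)) = min a (N * d) := by
  intro N
  induction N with
  | zero => simp [min_eq_right ha]
  | succ N ih =>
      rw [Finset.sum_range_succ, ih]
      rcases le_or_gt a (N * d) with h | h
      · have h1 : min a (N * d) = a := min_eq_left h
        have h2 : min d (a - N * d) ≤ 0 := le_trans (min_le_right _ _) (by linarith)
        have h3 : max 0 (min d (a - N * d)) = 0 := max_eq_left h2
        have h4 : min a ((N + 1 : ℕ) * d) = a := by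
          apply min_eq_left
          push_cast
          nlinarith
        rw [h1, h3, h4, add_zero]
      · have h1 : min a (N * d) = N * d := min_eq_right h.le
        have h2 : 0 ≤ min d (a - N * d) := le_min hd (by linarith)
        have h3 : max 0 (min d (a - N * d)) = min d (a - N * d) := max_eq_right h2
        rw [h1, h3]
        rcases le_total d (a - N * d) with h4 | h4
        · rw [min_eq_left h4, eq_comm]
          have : (↑(N + 1) : ℝ) * d ≤ a := by push_cast; linarith
          rw [min_eq_right this]
          push_cast; ring
        · rw [min_eq_right h4, eq_comm]
          have : a ≤ (↑(N + 1) : ℝ) * d := by push_cast; linarith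
          rw [min_eq_left this]
          ring

noncomputable def rieszContentAuxB (Λ : (Y →ᵇ ℝ≥0) →ₗ[ℝ≥0] ℝ≥0) : TopologicalSpace.Compacts Y → ℝ≥0 :=
  fun K => sInf (Λ '' { f : Y →ᵇ ℝ≥0 | ∀ x ∈ K, (1 : ℝ≥0) ≤ f x })

theorem rieszContentAuxB_image_nonempty (Λ : (Y →ᵇ ℝ≥0) →ₗ[ℝ≥0] ℝ≥0)
    (K : TopologicalSpace.Compacts Y) :
    (Λ '' { f : Y →ᵇ ℝ≥0 | ∀ x ∈ K, (1 : ℝ≥0) ≤ f x }).Nonempty :=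
  ⟨_, ⟨BoundedContinuousFunction.const Y 1, fun _ _ => le_rfl, rfl⟩⟩

theorem rieszContentAuxB_mono (Λ : (Y →ᵇ ℝ≥0) →ₗ[ℝ≥0] ℝ≥0)
    {K₁ K₂ : TopologicalSpace.Compacts Y} (h : K₁ ≤ K₂) :
    rieszContentAuxB Λ K₁ ≤ rieszContentAuxB Λ K₂ :=
  csInf_le_csInf (OrderBot.bddBelow _) (rieszContentAuxB_image_nonempty Λ K₂)
    (Set.image_mono fun _ hf x hx => hf x (h hx))

theorem rieszContentAuxB_le (Λ : (Y →ᵇ ℝ≥0) →ₗ[ℝ≥0] ℝ≥0)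
    {K : TopologicalSpace.Compacts Y} {f : Y →ᵇ ℝ≥0} (h : ∀ x ∈ K, (1 : ℝ≥0) ≤ f x) :
    rieszContentAuxB Λ K ≤ Λ f :=
  csInf_le (OrderBot.bddBelow _) ⟨f, ⟨h, rfl⟩⟩

theorem exists_lt_rieszContentAuxB_add_pos (Λ : (Y →ᵇ ℝ≥0) →ₗ[ℝ≥0] ℝ≥0)
    (K : TopologicalSpace.Compacts Y) {ε : ℝ≥0} (εpos : 0 < ε) :
    ∃ f : Y →ᵇ ℝ≥0, (∀ x ∈ K, (1 : ℝ≥0) ≤ f x) ∧ Λ f < rieszContentAuxB Λ K + ε := by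
  obtain ⟨α, ⟨⟨f, f_hyp⟩, α_hyp⟩⟩ :=
    exists_lt_of_csInf_lt (rieszContentAuxB_image_nonempty Λ K)
      (lt_add_of_pos_right (rieszContentAuxB Λ K) εpos)
  refine ⟨f, f_hyp.left, ?_⟩
  rw [f_hyp.right]
  exact α_hyp

theorem rieszContentAuxB_sup_le (Λ : (Y →ᵇ ℝ≥0) →ₗ[ℝ≥0] ℝ≥0)
    (K1 K2 : TopologicalSpace.Compacts Y) :
    rieszContentAuxB Λ (K1 ⊔ K2) ≤ rieszContentAuxB Λ K1 + rieszContentAuxB Λ K2 := by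
  apply _root_.le_of_forall_pos_le_add
  intro ε εpos
  obtain ⟨f1, hf1⟩ := exists_lt_rieszContentAuxB_add_pos Λ K1 (half_pos εpos)
  obtain ⟨f2, hf2⟩ := exists_lt_rieszContentAuxB_add_pos Λ K2 (half_pos εpos)
  have hu : ∀ x ∈ K1 ⊔ K2, (1 : ℝ≥0) ≤ (f1 + f2) x := by
    rintro x (x_in_K1 | x_in_K2)
    · exact le_add_right (hf1.left x x_in_K1)
    · exact le_add_left (hf2.left x x_in_K2)
  apply (rieszContentAuxB_le Λ hu).trans (le_of_lt _)
  rw [map_add]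
  apply lt_of_lt_of_le (_root_.add_lt_add hf1.right hf2.right) (le_of_eq _)
  rw [add_assoc, add_comm (ε / 2), add_assoc, add_halves ε, add_assoc]

variable [MeasurableSpace Y] [BorelSpace Y] [Nonempty Y]
  (T : Y → Y) (hT : Continuous T)

theorem aux_riesz_invariant (Λ : (Y →ᵇ ℝ≥0) →ₗ[ℝ≥0] ℝ≥0)
    (hmono : ∀ f g : Y →ᵇ ℝ≥0, (∀ x, f x ≤ g x) → Λ f ≤ Λ g)
    (hone : Λ (BoundedContinuousFunction.const Y (1 : ℝ≥0)) = 1)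
    (hinv : ∀ f : Y →ᵇ ℝ≥0, Λ (f.compContinuous ⟨T, hT⟩) = Λ f) :
    ∃ m : ProbabilityMeasure Y, (m : Measure Y).map T = (m : Measure Y) ∧
      ∀ f : Y →ᵇ ℝ≥0, ∫⁻ x, (f x : ℝ≥0∞) ∂(m : Measure Y) ≤ (Λ f : ℝ≥0∞) := by
  classical
  -- the content induced by `Λ`
  have sup_disjoint : ∀ K₁ K₂ : TopologicalSpace.Compacts Y, Disjoint (K₁ : Set Y) K₂ →
      IsClosed (K₁ : Set Y) → IsClosed (K₂ : Set Y) →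
      rieszContentAuxB Λ (K₁ ⊔ K₂) = rieszContentAuxB Λ K₁ + rieszContentAuxB Λ K₂ := by
    intro K₁ K₂ hd _ _
    refine le_antisymm (rieszContentAuxB_sup_le Λ K₁ K₂) ?_
    refine le_csInf (rieszContentAuxB_image_nonempty Λ (K₁ ⊔ K₂)) ?_
    rintro b ⟨f, hf, rfl⟩
    obtain ⟨u, hu0, hu1, huI⟩ := exists_continuous_zero_one_of_isClosed
      K₁.isCompact.isClosed K₂.isCompact.isClosed hd
    set v₁ : Y →ᵇ ℝ≥0 :=
      (mkOfCompact ⟨fun x => (f x : ℝ) * (1 - u x), (NNReal.continuous_coe.comp f.continuous).mul (continuous_const.sub u.continuous)⟩).nnrealPart with hv₁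
    set v₂ : Y →ᵇ ℝ≥0 :=
      (mkOfCompact ⟨fun x => (f x : ℝ) * u x, (NNReal.continuous_coe.comp f.continuous).mul u.continuous⟩).nnrealPart with hv₂
    have hval₁ : ∀ x, (v₁ x : ℝ) = (f x : ℝ) * (1 - u x) := by
      intro x
      have h1 : (0:ℝ) ≤ (f x : ℝ) * (1 - u x) :=
        mul_nonneg (f x).coe_nonneg (by linarith [(huI x).2])
      simp [hv₁, nnrealPart_coeFn_eq, Real.coe_toNNReal', max_eq_left h1]
    have hval₂ : ∀ x, (v₂ x : ℝ) = (f x : ℝ) * u x := by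
      intro x
      have h1 : (0:ℝ) ≤ (f x : ℝ) * u x :=
        mul_nonneg (f x).coe_nonneg (huI x).1
      simp [hv₂, nnrealPart_coeFn_eq, Real.coe_toNNReal', max_eq_left h1]
    have hadd : v₁ + v₂ = f := by
      ext x
      rw [BoundedContinuousFunction.add_apply, NNReal.coe_add, hval₁ x, hval₂ x]
      ring
    have h₁ : ∀ x ∈ K₁, (1:ℝ≥0) ≤ v₁ x := by
      intro x hx
      have hfx : (1:ℝ≥0) ≤ f x := hf x (Set.mem_union_left _ hx)
      rw [← NNReal.coe_le_coe, hval₁ x, hu0 hx]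
      rw [← NNReal.coe_le_coe] at hfx
      push_cast at hfx ⊢
      simpa using hfx
    have h₂ : ∀ x ∈ K₂, (1:ℝ≥0) ≤ v₂ x := by
      intro x hx
      have hfx : (1:ℝ≥0) ≤ f x := hf x (Set.mem_union_right _ hx)
      rw [← NNReal.coe_le_coe, hval₂ x, hu1 hx]
      rw [← NNReal.coe_le_coe] at hfx
      push_cast at hfx ⊢
      simpa using hfx
    calc rieszContentAuxB Λ K₁ + rieszContentAuxB Λ K₂ ≤ Λ v₁ + Λ v₂ :=
          add_le_add (rieszContentAuxB_le Λ h₁) (rieszContentAuxB_le Λ h₂)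
    _ = Λ (v₁ + v₂) := (map_add Λ v₁ v₂).symm
    _ = Λ f := by rw [hadd]
  set ξ : Content Y :=
    { toFun := fun K => rieszContentAuxB Λ K
      mono' := fun K₁ K₂ h => rieszContentAuxB_mono Λ h
      sup_disjoint' := sup_disjoint
      sup_le' := fun K₁ K₂ => rieszContentAuxB_sup_le Λ K₁ K₂ } with hξ
  have huniv : rieszContentAuxB Λ ⊤ = 1 := by
    refine le_antisymm ?_ ?_
    · have h1 : ∀ x ∈ (⊤ : TopologicalSpace.Compacts Y), (1:ℝ≥0) ≤
          (BoundedContinuousFunction.const Y (1:ℝ≥0)) x := fun x _ => by simp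
      have := rieszContentAuxB_le Λ h1
      rwa [hone] at this
    · refine le_csInf (rieszContentAuxB_image_nonempty Λ ⊤) ?_
      rintro b ⟨f, hf, rfl⟩
      calc (1:ℝ≥0) = Λ (BoundedContinuousFunction.const Y (1:ℝ≥0)) := hone.symm
      _ ≤ Λ f := hmono _ _ fun x => by simpa using hf x trivial
  have hm_univ : ξ.measure Set.univ = 1 := by
    rw [ξ.measure_apply MeasurableSet.univ, ξ.outerMeasure_of_isOpen Set.univ isOpen_univ,
      ξ.innerContent_of_isCompact isCompact_univ isOpen_univ]
    show ((rieszContentAuxB Λ ⟨Set.univ, isCompact_univ⟩ : ℝ≥0) : ℝ≥0∞) = 1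
    have : (⟨Set.univ, isCompact_univ⟩ : TopologicalSpace.Compacts Y) = ⊤ := rfl
    rw [this, huniv]
    simp
  -- invariance
  have key : ∀ K : TopologicalSpace.Compacts Y,
      rieszContentAuxB Λ K ≤ rieszContentAuxB Λ (K.map T hT) := by
    intro K
    refine le_csInf (rieszContentAuxB_image_nonempty Λ _) ?_
    rintro b ⟨f, hf, rfl⟩
    rw [← hinv f]
    refine rieszContentAuxB_le Λ ?_
    intro x hx
    have hTx : T x ∈ (K.map T hT : Set Y) := by
      rw [TopologicalSpace.Compacts.coe_map]
      exact Set.mem_image_of_mem T hx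
    simpa using hf (T x) hTx
  have hinner : ∀ (U : Set Y) (hU : IsOpen U),
      ξ.innerContent ⟨T ⁻¹' U, hU.preimage hT⟩ ≤ ξ.innerContent ⟨U, hU⟩ := by
    intro U hU
    refine iSup₂_le fun K hK => ?_
    calc (ξ K : ℝ≥0∞) ≤ (ξ (K.map T hT) : ℝ≥0∞) := ENNReal.coe_le_coe.mpr (key K)
    _ ≤ _ := ξ.le_innerContent _ _
          (by rw [TopologicalSpace.Compacts.coe_map]; exact Set.image_subset_iff.mpr hK)
  have houter : ∀ s : Set Y, ξ.outerMeasure (T ⁻¹' s) ≤ ξ.outerMeasure s := by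
    intro s
    conv_rhs => rw [ξ.outerMeasure_eq_iInf]
    refine le_iInf fun U => le_iInf fun hU => le_iInf fun hsU => ?_
    calc ξ.outerMeasure (T ⁻¹' s) ≤ ξ.outerMeasure (T ⁻¹' U) :=
          ξ.outerMeasure.mono (Set.preimage_mono hsU)
    _ = ξ.innerContent ⟨T ⁻¹' U, hU.preimage hT⟩ := ξ.outerMeasure_of_isOpen _ (hU.preimage hT)
    _ ≤ ξ.innerContent ⟨U, hU⟩ := hinner U hU
  have hmle : ∀ s : Set Y, MeasurableSet s → ξ.measure (T ⁻¹' s) ≤ ξ.measure s := by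
    intro s hs
    rw [ξ.measure_apply hs, ξ.measure_apply (hs.preimage hT.measurable)]
    exact houter s
  have hmap : (ξ.measure).map T = ξ.measure := by
    refine Measure.ext fun s hs => ?_
    rw [Measure.map_apply hT.measurable hs]
    refine le_antisymm (hmle s hs) ?_
    have h1 := hmle sᶜ hs.compl
    rw [Set.preimage_compl] at h1
    have h2 : ξ.measure (T ⁻¹' s)ᶜ = 1 - ξ.measure (T ⁻¹' s) := by
      rw [measure_compl (hs.preimage hT.measurable) (measure_ne_top _ _), hm_univ]
    have h3 : ξ.measure sᶜ = 1 - ξ.measure s := by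
      rw [measure_compl hs (measure_ne_top _ _), hm_univ]
    rw [h2, h3] at h1
    have hles : ξ.measure s ≤ 1 := by
      rw [← hm_univ]; exact measure_mono (Set.subset_univ s)
    exact (ENNReal.sub_le_sub_iff_left hles (by norm_num)).mp h1
  -- the integral bound
  have hintle : ∀ g : Y →ᵇ ℝ≥0, ∫⁻ x, (g x : ℝ≥0∞) ∂ξ.measure ≤ (Λ g : ℝ≥0∞) := by
    intro g
    by_cases hM0 : nndist g 0 = 0
    · have hg0 : ∀ x, g x = 0 := fun x =>
        le_antisymm (le_trans (BoundedContinuousFunction.NNReal.upper_bound g x)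
          (le_of_eq hM0)) (zero_le)
      have : ∫⁻ x, (g x : ℝ≥0∞) ∂ξ.measure = 0 := by
        simp [hg0]
      rw [this]; exact zero_le
    · set M : ℝ≥0 := nndist g 0 with hMdef
      have hgM : ∀ x, g x ≤ M := fun x => BoundedContinuousFunction.NNReal.upper_bound g x
      refine ENNReal.le_of_forall_pos_le_add fun ε hε _ => ?_
      obtain ⟨N₀, hN₀⟩ := exists_nat_ge (M / ε : ℝ≥0)
      set N : ℕ := N₀ + 1 with hNdef
      have hNne : (N : ℝ≥0) ≠ 0 := Nat.cast_ne_zero.mpr (Nat.succ_ne_zero N₀)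
      set d : ℝ≥0 := M / N with hd
      have hdne : d ≠ 0 := div_ne_zero hM0 hNne
      have hNd : (N : ℝ≥0) * d = M := by
        rw [hd]; field_simp
      have hdε : d ≤ ε := by
        rw [hd, div_le_iff₀ (pos_iff_ne_zero.mpr hNne)]
        have h1 : M / ε ≤ (N : ℝ≥0) := le_trans hN₀ (by exact_mod_cast Nat.le_succ N₀)
        rw [div_le_iff₀ hε] at h1
        calc M ≤ (N:ℝ≥0) * ε := h1
        _ = ε * N := mul_comm _ _
      set h : ℕ → (Y →ᵇ ℝ≥0) := fun j =>
        (mkOfCompact ⟨fun x => min (d:ℝ) ((g x : ℝ) - j * d), continuous_const.min ((NNReal.continuous_coe.comp g.continuous).sub continuous_const)⟩).nnrealPart with hh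
      have hval : ∀ j x, (h j x : ℝ) = max 0 (min (d:ℝ) ((g x : ℝ) - j * d)) := by
        intro j x
        rw [max_comm]
        simp [hh, nnrealPart_coeFn_eq, Real.coe_toNNReal']
      have hsum_pt : ∀ x, ∑ j ∈ Finset.range N, h j x = g x := by
        intro x
        apply NNReal.coe_injective
        push_cast [hval]
        rw [aux_real_sum_min (g x : ℝ) (d:ℝ) (g x).coe_nonneg d.coe_nonneg N]
        have : (g x : ℝ) ≤ (N : ℝ) * d := by
          have := hgM x
          rw [← hNd] at this
          exact_mod_cast this
        exact min_eq_left this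
      have Hj : ∀ j : ℕ, Measurable fun x => ((h j x : ℝ≥0) : ℝ≥0∞) := fun j =>
        measurable_coe_nnreal_ennreal.comp (h j).continuous.measurable
      have hint : ∫⁻ x, (g x : ℝ≥0∞) ∂ξ.measure
          = ∑ j ∈ Finset.range N, ∫⁻ x, (h j x : ℝ≥0∞) ∂ξ.measure := by
        rw [← lintegral_finset_sum _ (fun j _ => Hj j)]
        refine lintegral_congr fun x => ?_
        rw [← hsum_pt x]
        push_cast
        rfl
      set U : ℕ → Set Y := fun j => {x | (j : ℝ≥0) * d < g x} with hU
      have hUopen : ∀ j, IsOpen (U j) := fun j => isOpen_lt continuous_const g.continuous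
      have hUj_bound : ∀ j, ∫⁻ x, (h j x : ℝ≥0∞) ∂ξ.measure
          ≤ (d : ℝ≥0∞) * ξ.measure (U j) := by
        intro j
        have hpt : ∀ x, (h j x : ℝ≥0∞) ≤ (U j).indicator (fun _ => (d:ℝ≥0∞)) x := by
          intro x
          by_cases hx : x ∈ U j
          · rw [Set.indicator_of_mem hx]
            refine ENNReal.coe_le_coe.mpr ?_
            rw [← NNReal.coe_le_coe, hval]
            exact max_le d.coe_nonneg (min_le_left _ _)
          · rw [Set.indicator_of_notMem hx]
            have hxle : (g x : ℝ) ≤ (j : ℝ) * d := by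
              have : ¬ ((j : ℝ≥0) * d < g x) := hx
              rw [not_lt] at this
              exact_mod_cast this
            have : (h j x : ℝ) = 0 := by
              rw [hval]
              exact max_eq_left (le_trans (min_le_right _ _) (by linarith))
            have : h j x = 0 := by exact_mod_cast this
            simp [this]
        calc ∫⁻ x, (h j x : ℝ≥0∞) ∂ξ.measure
            ≤ ∫⁻ x, (U j).indicator (fun _ => (d:ℝ≥0∞)) x ∂ξ.measure := lintegral_mono hpt
        _ = (d:ℝ≥0∞) * ξ.measure (U j) := lintegral_indicator_const (hUopen j).measurableSet _
      have hU_content : ∀ j : ℕ,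
          ξ.measure (U (j+1)) ≤ ((d⁻¹ * Λ (h j) : ℝ≥0) : ℝ≥0∞) := by
        intro j
        rw [ξ.measure_apply (hUopen (j+1)).measurableSet,
          ξ.outerMeasure_of_isOpen _ (hUopen (j+1))]
        refine iSup₂_le fun K hK => ?_
        refine ENNReal.coe_le_coe.mpr ?_
        have h1 : ∀ x ∈ K, (1:ℝ≥0) ≤ (d⁻¹ • h j) x := by
          intro x hx
          have hxU : ((j:ℝ≥0) + 1) * d < g x := by
            have := hK hx
            have h2 : (((j+1:ℕ) : ℝ≥0)) * d < g x := this
            push_cast at h2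
            exact h2
          have hjd : (h j x : ℝ) = d := by
            rw [hval]
            have hlt : (j:ℝ)*d + d < (g x : ℝ) := by
              rw [← NNReal.coe_lt_coe] at hxU
              push_cast at hxU
              linarith
            rw [min_eq_left (by linarith), max_eq_right d.coe_nonneg]
          have hjd' : h j x = d := by exact_mod_cast hjd
          have : (d⁻¹ • h j) x = d⁻¹ * h j x := rfl
          rw [this, hjd', inv_mul_cancel₀ hdne]
        have h2 := rieszContentAuxB_le Λ h1
        rw [_root_.map_smul] at h2
        show rieszContentAuxB Λ K ≤ _
        simpa [smul_eq_mul] using h2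
      calc ∫⁻ x, (g x : ℝ≥0∞) ∂ξ.measure
          = ∑ j ∈ Finset.range N, ∫⁻ x, (h j x : ℝ≥0∞) ∂ξ.measure := hint
      _ = (∑ j ∈ Finset.range N₀, ∫⁻ x, (h (j+1) x : ℝ≥0∞) ∂ξ.measure)
            + ∫⁻ x, (h 0 x : ℝ≥0∞) ∂ξ.measure := by
          rw [hNdef, Finset.sum_range_succ']
      _ ≤ (∑ j ∈ Finset.range N₀, (Λ (h j) : ℝ≥0∞)) + (d : ℝ≥0∞) * 1 := by
          refine add_le_add (Finset.sum_le_sum fun j _ => ?_) ?_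
          · calc ∫⁻ x, (h (j+1) x : ℝ≥0∞) ∂ξ.measure
                ≤ (d : ℝ≥0∞) * ξ.measure (U (j+1)) := hUj_bound (j+1)
            _ ≤ (d : ℝ≥0∞) * ((d⁻¹ * Λ (h j) : ℝ≥0) : ℝ≥0∞) :=
                mul_le_mul_right (hU_content j) _
            _ = (Λ (h j) : ℝ≥0∞) := by
                rw [← ENNReal.coe_mul, mul_inv_cancel_left₀ hdne]
          · calc ∫⁻ x, (h 0 x : ℝ≥0∞) ∂ξ.measure
                ≤ (d : ℝ≥0∞) * ξ.measure (U 0) := hUj_bound 0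
            _ ≤ (d : ℝ≥0∞) * 1 := by
                refine mul_le_mul_right ?_ _
                rw [← hm_univ]
                exact measure_mono (Set.subset_univ _)
      _ ≤ (Λ g : ℝ≥0∞) + (ε : ℝ≥0∞) := by
          refine add_le_add ?_ (by rw [mul_one]; exact_mod_cast hdε)
          rw [← ENNReal.coe_finset_sum]
          refine ENNReal.coe_le_coe.mpr ?_
          rw [← map_sum]
          refine hmono _ _ fun x => ?_
          have hc1 : (∑ j ∈ Finset.range N₀, h j) x = ∑ j ∈ Finset.range N₀, h j x := by
            simp
          rw [hc1, ← hsum_pt x]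
          exact Finset.sum_le_sum_of_subset (Finset.range_subset_range.mpr (Nat.le_succ N₀))
  exact ⟨⟨ξ.measure, ⟨hm_univ⟩⟩, hmap, hintle⟩

theorem aux_exists_functional
    (T : Y → Y) (hT : Continuous T)
    (y : ℕ → Y) (n : ℕ → ℕ) (hn : ∀ k, 1 ≤ n k) (hntop : Tendsto n atTop atTop) :
    ∃ Λ : (Y →ᵇ ℝ≥0) →ₗ[ℝ≥0] ℝ≥0,
      (∀ f g : Y →ᵇ ℝ≥0, (∀ x, f x ≤ g x) → Λ f ≤ Λ g) ∧
      Λ (BoundedContinuousFunction.const Y (1 : ℝ≥0)) = 1 ∧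
      (∀ f : Y →ᵇ ℝ≥0, Λ (f.compContinuous ⟨T, hT⟩) = Λ f) ∧
      (∀ (f : Y →ᵇ ℝ≥0) (c : ℝ≥0),
        (∀ k, (∑ i ∈ Finset.range (n k), (f (T^[i] (y k)) : ℝ)) ≤ (c : ℝ) * n k) →
          Λ f ≤ c) := by
  classical
  set 𝒰 : Ultrafilter ℕ := Ultrafilter.of atTop with h𝒰def
  have h𝒰 : (𝒰 : Filter ℕ) ≤ atTop := Ultrafilter.of_le _
  set A : ℕ → (Y →ᵇ ℝ≥0) → ℝ≥0 :=
    fun k f => (n k : ℝ≥0)⁻¹ * ∑ i ∈ Finset.range (n k), f (T^[i] (y k)) with hA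
  have hnne : ∀ k, ((n k : ℝ≥0)) ≠ 0 :=
    fun k => Nat.cast_ne_zero.mpr (Nat.one_le_iff_ne_zero.mp (hn k))
  have hnneR : ∀ k, ((n k : ℝ)) ≠ 0 :=
    fun k => Nat.cast_ne_zero.mpr (Nat.one_le_iff_ne_zero.mp (hn k))
  have hAle : ∀ k (f : Y →ᵇ ℝ≥0), A k f ≤ nndist f 0 := by
    intro k f
    rw [hA]
    calc (n k : ℝ≥0)⁻¹ * ∑ i ∈ Finset.range (n k), f (T^[i] (y k))
        ≤ (n k : ℝ≥0)⁻¹ * ∑ _i ∈ Finset.range (n k), nndist f 0 :=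
        mul_le_mul_right (Finset.sum_le_sum fun i _ => NNReal.upper_bound f _) _
    _ = (n k : ℝ≥0)⁻¹ * ((n k : ℝ≥0) * nndist f 0) := by
        rw [Finset.sum_const, Finset.card_range, nsmul_eq_mul]
    _ = nndist f 0 := by rw [← mul_assoc, inv_mul_cancel₀ (hnne k), one_mul]
  have hex : ∀ f : Y →ᵇ ℝ≥0, ∃ a : ℝ≥0, Tendsto (fun k => A k f) 𝒰 (𝓝 a) := by
    intro f
    have hmem : (𝒰.map fun k => A k f : Filter ℝ≥0) ≤ 𝓟 (Set.Icc (0:ℝ≥0) (nndist f 0)) := by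
      rw [Ultrafilter.coe_map, Filter.le_principal_iff, Filter.mem_map]
      exact Filter.univ_mem' fun k => ⟨zero_le, hAle k f⟩
    obtain ⟨a, -, ha⟩ :=
      (isCompact_Icc (a := (0:ℝ≥0)) (b := nndist f 0)).ultrafilter_le_nhds
        (𝒰.map fun k => A k f) hmem
    refine ⟨a, ?_⟩
    rw [Ultrafilter.coe_map] at ha
    exact ha
  choose L hL using hex
  have hLadd : ∀ f g : Y →ᵇ ℝ≥0, L (f + g) = L f + L g := by
    intro f g
    refine tendsto_nhds_unique (hL (f + g)) ?_
    have : (fun k => A k (f + g)) = fun k => A k f + A k g := by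
      funext k
      rw [hA]
      simp only [BoundedContinuousFunction.add_apply, Finset.sum_add_distrib, mul_add]
    rw [this]
    exact (hL f).add (hL g)
  have hLsmul : ∀ (c : ℝ≥0) (f : Y →ᵇ ℝ≥0), L (c • f) = c * L f := by
    intro c f
    refine tendsto_nhds_unique (hL (c • f)) ?_
    have : (fun k => A k (c • f)) = fun k => c * A k f := by
      funext k
      rw [hA]
      simp only [BoundedContinuousFunction.coe_smul, Pi.smul_apply, smul_eq_mul]
      rw [← Finset.mul_sum]
      ring
    rw [this]
    exact (hL f).const_mul c
  set Λ : (Y →ᵇ ℝ≥0) →ₗ[ℝ≥0] ℝ≥0 :=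
    { toFun := L
      map_add' := hLadd
      map_smul' := fun c f => by simpa using hLsmul c f } with hΛ
  have hΛapp : ∀ f, Λ f = L f := fun f => rfl
  refine ⟨Λ, ?_, ?_, ?_, ?_⟩
  · -- monotone
    intro f g hfg
    rw [hΛapp, hΛapp]
    refine le_of_tendsto_of_tendsto' (hL f) (hL g) fun k => ?_
    rw [hA]
    exact mul_le_mul_right (Finset.sum_le_sum fun i _ => hfg _) _
  · -- normalized
    rw [hΛapp]
    refine tendsto_nhds_unique (hL _) ?_
    have : (fun k => A k (BoundedContinuousFunction.const Y (1:ℝ≥0))) = fun _ => 1 := by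
      funext k
      rw [hA]
      simp only [BoundedContinuousFunction.const_apply, Finset.sum_const, Finset.card_range,
        nsmul_eq_mul, mul_one]
      exact inv_mul_cancel₀ (hnne k)
    rw [this]
    exact tendsto_const_nhds
  · -- invariance
    intro f
    set fT : Y →ᵇ ℝ≥0 := f.compContinuous ⟨T, hT⟩ with hfT
    rw [hΛapp, hΛapp]
    have hreal : ∀ k, ((A k fT : ℝ≥0) : ℝ) - ((A k f : ℝ≥0) : ℝ)
        = (n k : ℝ)⁻¹ * ((f (T^[n k] (y k)) : ℝ) - (f (T^[0] (y k)) : ℝ)) := by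
      intro k
      rw [hA]
      push_cast
      rw [← mul_sub]
      congr 1
      have h1 : ∀ i, ((fT (T^[i] (y k)) : ℝ)) = (f (T^[i+1] (y k)) : ℝ) := by
        intro i
        rw [hfT]
        simp only [BoundedContinuousFunction.coe_compContinuous, Function.comp_apply]
        rw [Function.iterate_succ_apply' T i (y k)]
        rfl
      calc ∑ i ∈ Finset.range (n k), ((fT (T^[i] (y k)) : ℝ))
            - ∑ i ∈ Finset.range (n k), ((f (T^[i] (y k)) : ℝ))
          = ∑ i ∈ Finset.range (n k),
              (((f (T^[i+1] (y k)) : ℝ)) - ((f (T^[i] (y k)) : ℝ))) := by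
            rw [Finset.sum_sub_distrib]
            congr 1
            exact Finset.sum_congr rfl fun i _ => h1 i
      _ = (f (T^[n k] (y k)) : ℝ) - (f (T^[0] (y k)) : ℝ) :=
            Finset.sum_range_sub (fun i => (f (T^[i] (y k)) : ℝ)) (n k)
    have hbound : ∀ k, ‖((A k fT : ℝ≥0) : ℝ) - ((A k f : ℝ≥0) : ℝ)‖
        ≤ (n k : ℝ)⁻¹ * (nndist f 0 : ℝ) := by
      intro k
      rw [hreal k, norm_mul, norm_inv]
      have h2 : ‖((n k : ℝ))‖ = (n k : ℝ) := by
        rw [Real.norm_eq_abs, abs_of_nonneg (Nat.cast_nonneg _)]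
      rw [h2]
      refine mul_le_mul_of_nonneg_left ?_ (by positivity)
      rw [Real.norm_eq_abs, abs_sub_le_iff]
      constructor
      · have := NNReal.upper_bound f (T^[n k] (y k))
        have h3 : (0:ℝ) ≤ (f (T^[0] (y k)) : ℝ) := (f _).coe_nonneg
        have h4 : ((f (T^[n k] (y k)) : ℝ≥0) : ℝ) ≤ ((nndist f 0 : ℝ≥0) : ℝ) := by
          exact_mod_cast this
        linarith
      · have := NNReal.upper_bound f (T^[0] (y k))
        have h3 : (0:ℝ) ≤ (f (T^[n k] (y k)) : ℝ) := (f _).coe_nonneg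
        have h4 : ((f (T^[0] (y k)) : ℝ≥0) : ℝ) ≤ ((nndist f 0 : ℝ≥0) : ℝ) := by
          exact_mod_cast this
        linarith
    have hzero : Tendsto (fun k => ((A k fT : ℝ≥0) : ℝ) - ((A k f : ℝ≥0) : ℝ)) 𝒰 (𝓝 0) := by
      refine squeeze_zero_norm hbound ?_
      have h1 : Tendsto (fun k => ((n k : ℝ))⁻¹) atTop (𝓝 0) := by
        refine Tendsto.inv_tendsto_atTop ?_
        exact tendsto_natCast_atTop_atTop.comp hntop
      have h2 : Tendsto (fun k => (n k : ℝ)⁻¹ * (nndist f 0 : ℝ)) atTop (𝓝 0) := by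
        simpa using h1.mul_const (nndist f 0 : ℝ)
      exact h2.mono_left h𝒰
    have hcoe : Tendsto (fun k => ((A k fT : ℝ≥0) : ℝ)) 𝒰 (𝓝 ((L f : ℝ≥0) : ℝ)) := by
      have h1 : Tendsto (fun k => ((A k f : ℝ≥0) : ℝ)) 𝒰 (𝓝 ((L f : ℝ≥0) : ℝ)) :=
        NNReal.tendsto_coe.mpr (hL f)
      have h2 := h1.add hzero
      simpa using h2
    have h3 : Tendsto (fun k => ((A k fT : ℝ≥0) : ℝ)) 𝒰 (𝓝 ((L fT : ℝ≥0) : ℝ)) :=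
      NNReal.tendsto_coe.mpr (hL fT)
    exact NNReal.coe_injective (tendsto_nhds_unique h3 hcoe)
  · -- bound
    intro f c hc
    rw [hΛapp]
    refine le_of_tendsto (hL f) (Filter.Eventually.of_forall fun k => ?_)
    rw [← NNReal.coe_le_coe]
    rw [hA]
    push_cast
    rw [inv_mul_le_iff₀ (lt_of_le_of_ne (Nat.cast_nonneg _) (Ne.symm (hnneR k)))]
    calc ∑ i ∈ Finset.range (n k), ((f (T^[i] (y k)) : ℝ)) ≤ (c : ℝ) * n k := hc k
    _ = (n k : ℝ) * c := mul_comm _ _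

end Aux



/-- If every `T`-invariant Borel probability measure `m` satisfies `∫ Φ dm ≥ Λ > 0`, then
for every `0 < lam < Λ` there is `C > 0` with `Σ_{i<n} Φ(Tⁱ y) ≥ log C + lam·n` for all
`y` and all `n ≥ 1`. -/
theorem uniform_birkhoff_bound_of_min_integral_pos
    {Y : Type*} [MetricSpace Y] [CompactSpace Y]
    [MeasurableSpace Y] [BorelSpace Y]
    (T : Y → Y) (hT : Continuous T)
    (Φ : Y → ℝ) (hΦ : Continuous Φ)
    (Λ : ℝ) (hΛ : 0 < Λ)
    (hmin : ∀ m : ProbabilityMeasure Y, (m : Measure Y).map T = (m : Measure Y) →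
      Λ ≤ ∫ y, Φ y ∂(m : Measure Y)) :
    ∀ lam : ℝ, 0 < lam → lam < Λ →
      ∃ C > 0, ∀ y : Y, ∀ n : ℕ, 1 ≤ n →
        Real.log C + lam * n ≤ ∑ i ∈ Finset.range n, Φ (T^[i] y) := by
  intro lam hlam hlamΛ
  by_contra hcon
  push_neg at hcon
  rcases isEmpty_or_nonempty Y with hY | hY
  · obtain ⟨y, -⟩ := hcon 1 one_pos
    exact (IsEmpty.false y).elim
  set Φb : Y →ᵇ ℝ := mkOfCompact ⟨Φ, hΦ⟩ with hΦb
  have hΦle : ∀ x, |Φ x| ≤ ‖Φb‖ := fun x => by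
    simpa [hΦb] using Φb.norm_coe_le_norm x
  have hc : ∀ k : ℕ, ∃ (yk : Y) (nk : ℕ), 1 ≤ nk ∧
      ∑ i ∈ Finset.range nk, Φ (T^[i] yk) < -(k:ℝ) + lam * nk := by
    intro k
    obtain ⟨yk, nk, h1, h2⟩ := hcon (Real.exp (-(k:ℝ))) (Real.exp_pos _)
    exact ⟨yk, nk, h1, by rwa [Real.log_exp] at h2⟩
  choose ys ns hns hlt using hc
  have hpos : 0 < lam + ‖Φb‖ := by
    have := norm_nonneg Φb
    linarith
  have hnge : ∀ k : ℕ, (k:ℝ) < (lam + ‖Φb‖) * ns k := by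
    intro k
    have hlow : -((ns k : ℝ) * ‖Φb‖) ≤ ∑ i ∈ Finset.range (ns k), Φ (T^[i] (ys k)) := by
      have h1 : ∀ i ∈ Finset.range (ns k), -‖Φb‖ ≤ Φ (T^[i] (ys k)) := fun i _ => by
        have := hΦle (T^[i] (ys k))
        rw [abs_le] at this
        exact this.1
      calc -((ns k : ℝ) * ‖Φb‖) = ∑ _i ∈ Finset.range (ns k), (-‖Φb‖) := by
            rw [Finset.sum_const, Finset.card_range, nsmul_eq_mul]
            ring
      _ ≤ _ := Finset.sum_le_sum h1
    have h2 := hlt k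
    nlinarith
  have hntop : Tendsto ns atTop atTop := by
    rw [tendsto_atTop]
    intro b
    have hev : ∀ᶠ k : ℕ in atTop, ((b:ℝ) * (lam + ‖Φb‖) ≤ (k:ℝ)) :=
      tendsto_natCast_atTop_atTop.eventually_ge_atTop _
    filter_upwards [hev] with k hk
    have h1 := hnge k
    have hb : (b:ℝ) < (ns k : ℝ) := by nlinarith
    exact_mod_cast hb.le
  obtain ⟨Lam, hmono, honeL, hinvL, hbound⟩ := aux_exists_functional T hT ys ns hns hntop
  obtain ⟨m, hmmap, hmint⟩ := aux_riesz_invariant T hT Lam hmono honeL hinvL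
  set gR : Y →ᵇ ℝ := Φb + BoundedContinuousFunction.const Y ‖Φb‖ with hgR
  set g : Y →ᵇ ℝ≥0 := gR.nnrealPart with hg
  have hgRval : ∀ x, gR x = Φ x + ‖Φb‖ := fun x => by
    simp [hgR, hΦb]
  have hgval : ∀ x, (g x : ℝ) = Φ x + ‖Φb‖ := by
    intro x
    have h0 : (0:ℝ) ≤ Φ x + ‖Φb‖ := by
      have := hΦle x
      rw [abs_le] at this
      linarith [this.1]
    rw [hg]
    show ((gR.nnrealPart x : ℝ≥0) : ℝ) = Φ x + ‖Φb‖
    rw [show gR.nnrealPart x = Real.toNNReal (gR x) from rfl]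
    rw [Real.coe_toNNReal _ (by rw [hgRval]; exact h0)]
    exact hgRval x
  set cb : ℝ≥0 := ⟨lam + ‖Φb‖, hpos.le⟩ with hcb
  have hgL : Lam g ≤ cb := by
    refine hbound g cb fun k => ?_
    have h1 : ∑ i ∈ Finset.range (ns k), (g (T^[i] (ys k)) : ℝ)
        = (∑ i ∈ Finset.range (ns k), Φ (T^[i] (ys k))) + (ns k : ℝ) * ‖Φb‖ := by
      rw [Finset.sum_congr rfl fun i _ => hgval (T^[i] (ys k)), Finset.sum_add_distrib,
        Finset.sum_const, Finset.card_range, nsmul_eq_mul]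
    rw [h1]
    have h2 := hlt k
    have hk0 : (0:ℝ) ≤ (k:ℝ) := Nat.cast_nonneg k
    have hcbv : (cb : ℝ) = lam + ‖Φb‖ := rfl
    rw [hcbv]
    nlinarith
  have hint1 : ∫⁻ x, ((g x : ℝ≥0) : ℝ≥0∞) ∂(m : Measure Y) ≤ ((cb : ℝ≥0) : ℝ≥0∞) :=
    le_trans (hmint g) (ENNReal.coe_le_coe.mpr hgL)
  have hgmeas : AEStronglyMeasurable (fun x => (g x : ℝ)) (m : Measure Y) :=
    (NNReal.continuous_coe.comp g.continuous).aestronglyMeasurable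
  have hgint : ∫ x, (g x : ℝ) ∂(m : Measure Y) ≤ lam + ‖Φb‖ := by
    rw [integral_eq_lintegral_of_nonneg_ae
      (Filter.Eventually.of_forall fun x => (g x).coe_nonneg) hgmeas]
    have hcongr : (fun x => ENNReal.ofReal ((g x : ℝ))) = fun x => ((g x : ℝ≥0) : ℝ≥0∞) := by
      funext x
      exact ENNReal.ofReal_coe_nnreal
    rw [hcongr]
    have h2 := ENNReal.toReal_mono ENNReal.coe_ne_top hint1
    rw [ENNReal.coe_toReal] at h2
    exact h2
  have hΦi : Integrable Φ (m : Measure Y) := by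
    have hh : Φ = fun x => Φb x := funext fun x => by simp [hΦb]
    rw [hh]
    exact Φb.integrable _
  have hΦint : ∫ x, Φ x ∂(m : Measure Y)
      = (∫ x, (g x : ℝ) ∂(m : Measure Y)) - ‖Φb‖ := by
    have h1 : ∫ x, (g x : ℝ) ∂(m : Measure Y)
        = (∫ x, Φ x ∂(m : Measure Y)) + ∫ _x, (‖Φb‖ : ℝ) ∂(m : Measure Y) := by
      rw [← integral_add hΦi (integrable_const _)]
      refine integral_congr_ae (Filter.Eventually.of_forall fun x => ?_)
      exact hgval x
    rw [h1, integral_const]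
    have hu : (m : Measure Y) Set.univ = 1 := measure_univ
    simp [hu]
  have hfin := hmin m hmmap
  rw [hΦint] at hfin
  linarith
end
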